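/- The oriented graph on Z/14Z with edges x → x+1 and x → x−2 for all x, together with x → x+4 for even x and x → x−6 for odd x, contains no independent set of size 4 and no transitive tournament on 3 vertices. Consequently r(I_4, L_3) > 14. -/

import Mathlib

/-- An oriented graph: no loops, at most one directed edge per pair
(asymmetry implies irreflexivity). -/
def IsOriented {V : Type*} (E : V → V → Prop) : Prop :=
  ∀ x y, E x y → ¬ E y x

/-- The graph contains an independent set of size `m`. -/
def HasIndep {V : Type*} (E : V → V → Prop) (m : ℕ) : Prop :=
  ∃ s : Finset V, s.card = m ∧ ∀ x ∈ s, ∀ y ∈ s, ¬ E x y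

/-- The graph contains a transitive tournament on `n` vertices. -/
def HasTransTour {V : Type*} (E : V → V → Prop) (n : ℕ) : Prop :=
  ∃ f : Fin n ↪ V, ∀ i j : Fin n, i < j → E (f i) (f j)

/-- `r(I_m, L_n)`: the least `k` such that every oriented graph on `k` vertices
contains an independent set of size `m` or a transitive tournament on `n` vertices. -/
noncomputable def ramseyIL (m n : ℕ) : ℕ :=
  sInf {k | ∀ (V : Type) (_ : Fintype V), Fintype.card V = k →
    ∀ E : V → V → Prop, IsOriented E → HasIndep E m ∨ HasTransTour E n}

/-- The oriented graph on ℤ/14ℤ with edges x → x+1 and x → x−2 for all x,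
x → x+4 for even x and x → x−6 for odd x. -/
def E14 (x y : ZMod 14) : Prop :=
  y - x = 1 ∨ y - x = 12 ∨ (x.val % 2 = 0 ∧ y - x = 4) ∨ (x.val % 2 = 1 ∧ y - x = 8)

instance (x y : ZMod 14) : Decidable (E14 x y) := by unfold E14; infer_instance

section Aux
variable {V : Type} [Fintype V] [DecidableEq V] {E : V → V → Prop}

omit [Fintype V] [DecidableEq V] in
lemma ne_of_edge (hO : IsOriented E) {a b : V} (h : E a b) : a ≠ b := by
  rintro rfl; exact hO a a h h

omit [Fintype V] [DecidableEq V] in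
lemma transTour_of_tri (hO : IsOriented E) {a b c : V}
    (hab : E a b) (hbc : E b c) (hac : E a c) : HasTransTour E 3 := by
  have h1 : a ≠ b := ne_of_edge hO hab
  have h2 : b ≠ c := ne_of_edge hO hbc
  have h3 : a ≠ c := ne_of_edge hO hac
  refine ⟨⟨![a, b, c], ?_⟩, ?_⟩
  · intro i j hij
    fin_cases i <;> fin_cases j <;> simp_all
  · intro i j hij
    fin_cases i <;> fin_cases j <;> simp_all [Fin.lt_def] <;> assumption

omit [Fintype V] [DecidableEq V] in
lemma indep_card_le (hI : ¬ HasIndep E 4) (s : Finset V)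
    (h : ∀ x ∈ s, ∀ y ∈ s, ¬ E x y) : s.card ≤ 3 := by
  by_contra hc
  push_neg at hc
  obtain ⟨t, hts, htc⟩ := Finset.exists_subset_card_eq (s := s) (n := 4) (by omega)
  exact hI ⟨t, htc, fun x hx y hy => h x (hts hx) y (hts hy)⟩

lemma key (hcard : Fintype.card V = 16) (hO : IsOriented E) :
    HasIndep E 4 ∨ HasTransTour E 3 := by
  classical
  by_contra hcon
  push_neg at hcon
  obtain ⟨hI, hT⟩ := hcon
  have tri : ∀ a b c : V, E a b → E b c → E a c → False :=
    fun a b c h1 h2 h3 => hT (transTour_of_tri hO h1 h2 h3)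
  have out_indep : ∀ v : V, ∀ x, E v x → ∀ y, E v y → ¬ E x y :=
    fun v x hx y hy hxy => tri v x y hx hxy hy
  obtain ⟨v⟩ : Nonempty V := Fintype.card_pos_iff.mp (by omega)
  set O1 := Finset.univ.filter (fun y => E v y) with hO1
  set I1 := Finset.univ.filter (fun y => E y v) with hI1
  set N1 := Finset.univ.filter (fun y => y ≠ v ∧ ¬ E v y ∧ ¬ E y v) with hN1
  have hO1c : O1.card ≤ 3 := indep_card_le hI _ (by
    intro x hx y hy; simp [hO1] at hx hy; exact out_indep v x hx y hy)
  have hI1c : I1.card ≤ 3 := indep_card_le hI _ (by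
    intro x hx y hy; simp [hI1] at hx hy
    exact fun hxy => tri x y v hxy hy hx)
  have hsub : Finset.univ ⊆ {v} ∪ O1 ∪ I1 ∪ N1 := by
    intro y _
    simp only [Finset.mem_union, Finset.mem_singleton, hO1, hI1, hN1, Finset.mem_filter,
      Finset.mem_univ, true_and]
    by_cases h1 : y = v
    · tauto
    · by_cases h2 : E v y
      · tauto
      · by_cases h3 : E y v <;> tauto
  have hN1c : 9 ≤ N1.card := by
    have := Finset.card_le_card hsub
    have h4 := Finset.card_union_le ({v} ∪ O1 ∪ I1) N1
    have h5 := Finset.card_union_le ({v} ∪ O1) I1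
    have h6 := Finset.card_union_le ({v} : Finset V) O1
    simp only [Finset.card_univ, hcard, Finset.card_singleton] at *
    omega
  have hN1v : ∀ x ∈ N1, x ≠ v ∧ ¬ E v x ∧ ¬ E x v := by
    intro x hx; simpa [hN1] using hx
  have indepN1 : ∀ s : Finset V, s ⊆ N1 → (∀ x ∈ s, ∀ y ∈ s, ¬ E x y) → s.card ≤ 2 := by
    intro s hs hind
    have : (insert v s).card ≤ 3 := indep_card_le hI _ (by
      intro x hx y hy
      simp only [Finset.mem_insert] at hx hy
      rcases hx with rfl | hx <;> rcases hy with rfl | hy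
      · exact fun h => hO _ _ h h
      · exact (hN1v y (hs hy)).2.1
      · exact (hN1v x (hs hx)).2.2
      · exact hind x hx y hy)
    have hvs : v ∉ s := fun hv => (hN1v v (hs hv)).1 rfl
    rw [Finset.card_insert_of_notMem hvs] at this
    omega
  obtain ⟨w, hw⟩ : ∃ w, w ∈ N1 := Finset.card_pos.mp (by omega) |>.elim fun w hw => ⟨w, hw⟩
  set O2 := N1.filter (fun y => E w y) with hO2
  set I2 := N1.filter (fun y => E y w) with hI2
  set N2 := N1.filter (fun y => y ≠ w ∧ ¬ E w y ∧ ¬ E y w) with hN2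
  have hO2c : O2.card ≤ 2 := indepN1 _ (Finset.filter_subset _ _) (by
    intro x hx y hy; simp [hO2] at hx hy; exact out_indep w x hx.2 y hy.2)
  have hI2c : I2.card ≤ 2 := indepN1 _ (Finset.filter_subset _ _) (by
    intro x hx y hy; simp [hI2] at hx hy
    exact fun hxy => tri x y w hxy hy.2 hx.2)
  have hsub2 : N1 ⊆ {w} ∪ O2 ∪ I2 ∪ N2 := by
    intro y hy
    simp only [Finset.mem_union, Finset.mem_singleton, hO2, hI2, hN2, Finset.mem_filter]
    by_cases h1 : y = w
    · tauto
    · by_cases h2 : E w y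
      · tauto
      · by_cases h3 : E y w <;> tauto
  have hN2c : 4 ≤ N2.card := by
    have := Finset.card_le_card hsub2
    have h4 := Finset.card_union_le ({w} ∪ O2 ∪ I2) N2
    have h5 := Finset.card_union_le ({w} ∪ O2) I2
    have h6 := Finset.card_union_le ({w} : Finset V) O2
    simp only [Finset.card_singleton] at *
    omega
  have hN2w : ∀ x ∈ N2, x ∈ N1 ∧ x ≠ w ∧ ¬ E w x ∧ ¬ E x w := by
    intro x hx; simpa [hN2] using hx
  have tourn : ∀ x ∈ N2, ∀ y ∈ N2, x ≠ y → E x y ∨ E y x := by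
    intro x hx y hy hxy
    by_contra hc
    push_neg at hc
    have h4 : ({v, w, x, y} : Finset V).card = 4 := by
      obtain ⟨hx1, hxw, hwx1, hxw1⟩ := hN2w x hx
      obtain ⟨hy1, hyw, hwy1, hyw1⟩ := hN2w y hy
      have hxv := (hN1v x hx1).1
      have hyv := (hN1v y hy1).1
      have hvw := (hN1v w hw).1
      rw [Finset.card_insert_of_notMem (by simp [Ne.symm hvw, Ne.symm hxv, Ne.symm hyv]),
        Finset.card_insert_of_notMem (by simp [Ne.symm hxw, Ne.symm hyw]),
        Finset.card_insert_of_notMem (by simp [hxy]), Finset.card_singleton]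
    apply hI
    refine ⟨{v, w, x, y}, h4, ?_⟩
    intro p hp q hq
    obtain ⟨hx1, hxw, hwx1, hxw1⟩ := hN2w x hx
    obtain ⟨hy1, hyw, hwy1, hyw1⟩ := hN2w y hy
    have hxN := hN1v x hx1
    have hyN := hN1v y hy1
    have hwN := hN1v w hw
    simp only [Finset.mem_insert, Finset.mem_singleton] at hp hq
    rcases hp with rfl | rfl | rfl | rfl <;> rcases hq with rfl | rfl | rfl | rfl <;>
      first
        | exact fun h => hO _ _ h h
        | exact hwN.2.1 | exact hwN.2.2
        | exact hxN.2.1 | exact hxN.2.2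
        | exact hyN.2.1 | exact hyN.2.2
        | exact hwx1 | exact hxw1 | exact hwy1 | exact hyw1
        | exact hc.1 | exact hc.2
  obtain ⟨a, ha⟩ : ∃ a, a ∈ N2 := Finset.card_pos.mp (by omega) |>.elim fun a ha => ⟨a, ha⟩
  set M := N2.erase a with hM
  have hMc : 3 ≤ M.card := by
    rw [hM, Finset.card_erase_of_mem ha]; omega
  have hMsub : M ⊆ (M.filter (fun y => E a y)) ∪ (M.filter (fun y => E y a)) := by
    intro y hy
    have hyN2 : y ∈ N2 := Finset.mem_of_mem_erase hy
    have hya : y ≠ a := Finset.ne_of_mem_erase hy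
    rcases tourn a ha y hyN2 (Ne.symm hya) with h | h
    · exact Finset.mem_union_left _ (Finset.mem_filter.mpr ⟨hy, h⟩)
    · exact Finset.mem_union_right _ (Finset.mem_filter.mpr ⟨hy, h⟩)
  have hpig : 2 ≤ (M.filter (fun y => E a y)).card ∨ 2 ≤ (M.filter (fun y => E y a)).card := by
    by_contra hc
    push_neg at hc
    have := Finset.card_le_card hMsub
    have := Finset.card_union_le (M.filter (fun y => E a y)) (M.filter (fun y => E y a))
    omega
  rcases hpig with h | h
  · obtain ⟨b, hb, c, hc', hbc⟩ := Finset.one_lt_card.mp h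
    simp only [Finset.mem_filter] at hb hc'
    have hbN2 : b ∈ N2 := Finset.mem_of_mem_erase hb.1
    have hcN2 : c ∈ N2 := Finset.mem_of_mem_erase hc'.1
    rcases tourn b hbN2 c hcN2 hbc with hbc' | hcb'
    · exact tri a b c hb.2 hbc' hc'.2
    · exact tri a c b hc'.2 hcb' hb.2
  · obtain ⟨b, hb, c, hc', hbc⟩ := Finset.one_lt_card.mp h
    simp only [Finset.mem_filter] at hb hc'
    have hbN2 : b ∈ N2 := Finset.mem_of_mem_erase hb.1
    have hcN2 : c ∈ N2 := Finset.mem_of_mem_erase hc'.1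
    rcases tourn b hbN2 c hcN2 hbc with hbc' | hcb'
    · exact tri b c a hbc' hc'.2 hb.2
    · exact tri c b a hcb' hb.2 hc'.2

end Aux

lemma E14_oriented : IsOriented E14 := by
  have : ∀ x y : ZMod 14, E14 x y → ¬ E14 y x := by decide
  exact this

lemma no_tri14 : ¬ ∃ a b c : ZMod 14, E14 a b ∧ E14 b c ∧ E14 a c := by decide

set_option maxHeartbeats 4000000 in
lemma no_indep_quad : ∀ a b c d : ZMod 14,
    (¬E14 a b ∧ ¬E14 b a ∧ ¬E14 a c ∧ ¬E14 c a ∧ ¬E14 a d ∧ ¬E14 d a ∧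
     ¬E14 b c ∧ ¬E14 c b ∧ ¬E14 b d ∧ ¬E14 d b ∧ ¬E14 c d ∧ ¬E14 d c) →
    (a = b ∨ a = c ∨ a = d ∨ b = c ∨ b = d ∨ c = d) := by decide

lemma no_indep14 : ¬ HasIndep E14 4 := by
  rintro ⟨s, hcard, hind⟩
  obtain ⟨a, t, hat, rfl, ht⟩ := Finset.card_eq_succ.mp hcard
  obtain ⟨b, c, d, hbc, hbd, hcd, rfl⟩ := Finset.card_eq_three.mp ht
  have hab : a ≠ b := fun h => hat (h ▸ by simp)
  have hac : a ≠ c := fun h => hat (h ▸ by simp)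
  have had : a ≠ d := fun h => hat (h ▸ by simp)
  have ma : a ∈ insert a ({b, c, d} : Finset (ZMod 14)) := by simp
  have mb : b ∈ insert a ({b, c, d} : Finset (ZMod 14)) := by simp
  have mc : c ∈ insert a ({b, c, d} : Finset (ZMod 14)) := by simp
  have md : d ∈ insert a ({b, c, d} : Finset (ZMod 14)) := by simp
  have := no_indep_quad a b c d
    ⟨hind a ma b mb, hind b mb a ma, hind a ma c mc, hind c mc a ma,
     hind a ma d md, hind d md a ma, hind b mb c mc, hind c mc b mb,
     hind b mb d md, hind d md b mb, hind c mc d md, hind d md c mc⟩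
  tauto

theorem stmt15 :
    (¬ HasIndep E14 4 ∧
      ¬ ∃ a b c : ZMod 14, E14 a b ∧ E14 b c ∧ E14 a c) ∧
    14 < ramseyIL 4 3 := by
  refine ⟨⟨no_indep14, no_tri14⟩, ?_⟩
  set S := {k | ∀ (V : Type) (_ : Fintype V), Fintype.card V = k →
    ∀ E : V → V → Prop, IsOriented E → HasIndep E 4 ∨ HasTransTour E 3} with hS
  have h16 : (16 : ℕ) ∈ S := by
    intro V inst hc E hO
    letI := Classical.decEq V
    exact key hc hO
  have hmem : sInf S ∈ S := Nat.sInf_mem ⟨16, h16⟩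
  have hgt : ∀ k ∈ S, 14 < k := by
    intro k hk
    by_contra hle
    push_neg at hle
    set g : Fin k → ZMod 14 := fun i => ((i : ℕ) : ZMod 14) with hg
    have ginj : Function.Injective g := by
      intro i j hij
      have hi : (i : ℕ) < 14 := lt_of_lt_of_le i.isLt hle
      have hj : (j : ℕ) < 14 := lt_of_lt_of_le j.isLt hle
      have := congrArg ZMod.val hij
      rw [hg] at this
      simp only at this
      rw [ZMod.val_natCast_of_lt hi, ZMod.val_natCast_of_lt hj] at this
      exact Fin.ext this
    have hO' : IsOriented (fun i j : Fin k => E14 (g i) (g j)) :=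
      fun i j h => E14_oriented (g i) (g j) h
    rcases hk (Fin k) inferInstance (by simp) _ hO' with ⟨s, hc4, hind⟩ | ⟨f, hf⟩
    · apply no_indep14
      refine ⟨s.image g, by rw [Finset.card_image_of_injective _ ginj, hc4], ?_⟩
      intro x hx y hy
      obtain ⟨i, hi, rfl⟩ := Finset.mem_image.mp hx
      obtain ⟨j, hj, rfl⟩ := Finset.mem_image.mp hy
      exact hind i hi j hj
    · exact no_tri14 ⟨g (f 0), g (f 1), g (f 2),
        hf 0 1 (by decide), hf 1 2 (by decide), hf 0 2 (by decide)⟩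
  have := hgt _ hmem
  exact this
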